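/- Let a < b be real numbers and let f : ℝ → ℝ be real-analytic on an open set U ⊆ ℝ containing the interval [a, b]. Then there exist constants C > 0 and ρ > 1 such that for every N ∈ ℕ there exist real polynomials P and Q with deg P + deg Q ≤ N, Q(x) ≠ 0 for all x ∈ [a, b], and sup_{x ∈ [a,b]} |f(x) − P(x)/Q(x)| ≤ C · ρ^{−N}. -/

import Mathlib

open Set Metric
open scoped ENNReal NNReal

lemma uniform_radius_aux (a b : ℝ) (hab : a ≤ b) (U : Set ℝ) (hsub : Set.Icc a b ⊆ U)
    (f : ℝ → ℝ) (hf : AnalyticOnNhd ℝ f U) :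
    ∃ δ : ℝ, 0 < δ ∧ ∀ y ∈ Set.Icc a b, ∃ p : FormalMultilinearSeries ℝ ℝ ℝ,
      HasFPowerSeriesOnBall f p y (ENNReal.ofReal (2*δ)) := by
  have hK : IsCompact (Set.Icc a b) := isCompact_Icc
  have key : ∀ t ∈ Set.Icc a b, ∃ ε : ℝ, 0 < ε ∧ ∃ p : FormalMultilinearSeries ℝ ℝ ℝ,
      HasFPowerSeriesOnBall f p t (ENNReal.ofReal ε) := by
    intro t ht
    obtain ⟨p, hp⟩ := hf t (hsub ht)
    obtain ⟨r, hpr⟩ := hp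
    obtain ⟨r', hr'0, hr'r⟩ := ENNReal.lt_iff_exists_nnreal_btwn.1 hpr.r_pos
    have hr'0' : (0:ℝ) < r' := by exact_mod_cast hr'0
    refine ⟨r', hr'0', p, ?_⟩
    have : ENNReal.ofReal (r' : ℝ) = (r' : ℝ≥0∞) := ENNReal.ofReal_coe_nnreal
    rw [this]
    exact hpr.mono hr'0 hr'r.le
  choose! ε hε0 hεp using key
  have hcover : Set.Icc a b ⊆ ⋃ t ∈ Set.Icc a b, Metric.ball t (ε t / 2) := by
    intro t ht
    exact Set.mem_biUnion ht (by simp [half_pos (hε0 t ht)])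
  obtain ⟨s, hsK, hsfin, hscov⟩ := hK.elim_finite_subcover_image
    (fun t ht => Metric.isOpen_ball) hcover
  have hane : a ∈ Set.Icc a b := ⟨le_refl a, hab⟩
  have hsne : (hsfin.toFinset).Nonempty := by
    obtain ⟨t, hts, -⟩ := Set.mem_iUnion₂.1 (hscov hane)
    exact ⟨t, hsfin.mem_toFinset.2 hts⟩
  set δ : ℝ := (hsfin.toFinset.inf' hsne ε) / 4 with hδdef
  have hδmem : ∀ t ∈ s, δ ≤ ε t / 4 := by
    intro t hts
    have := Finset.inf'_le ε (hsfin.mem_toFinset.2 hts)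
    unfold δ; linarith
  have hδ0 : 0 < δ := by
    obtain ⟨t₀, ht₀, h₀le⟩ := Finset.exists_mem_eq_inf' hsne ε
    have : 0 < ε t₀ := hε0 t₀ (hsK (hsfin.mem_toFinset.1 ht₀))
    unfold δ; rw [h₀le]; linarith
  refine ⟨δ, hδ0, fun y hy => ?_⟩
  obtain ⟨t, hts, hyt⟩ := Set.mem_iUnion₂.1 (hscov hy)
  have htK := hsK hts
  obtain ⟨p, hp⟩ := hεp t htK
  have hεt0 := hε0 t htK
  have hyt' : ‖y - t‖ < ε t / 2 := by
    rw [Metric.mem_ball, Real.dist_eq] at hyt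
    rwa [Real.norm_eq_abs]
  have hlt : (‖y - t‖₊ : ℝ≥0∞) < ENNReal.ofReal (ε t) := by
    rw [← (ofReal_norm (y - t)).trans (enorm_eq_nnnorm (y - t))]
    exact ENNReal.ofReal_lt_ofReal_iff_of_nonneg (norm_nonneg _) |>.2 (by linarith)
  have hco := hp.changeOrigin hlt
  rw [add_sub_cancel] at hco
  refine ⟨_, hco.mono (by positivity) ?_⟩
  -- ofReal (2δ) ≤ ofReal (ε t) - ‖y - t‖₊
  have hδε : δ ≤ ε t / 4 := hδmem t hts
  have h1 : ENNReal.ofReal (2*δ) + (‖y - t‖₊ : ℝ≥0∞) ≤ ENNReal.ofReal (ε t) := by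
    rw [← (ofReal_norm (y - t)).trans (enorm_eq_nnnorm (y - t)), ← ENNReal.ofReal_add (by positivity) (norm_nonneg _)]
    exact ENNReal.ofReal_le_ofReal (by linarith)
  exact ENNReal.le_sub_of_add_le_right (by simp) h1

open Set Metric Polynomial Finset
open scoped ENNReal NNReal

-- key cancellation for the rational partition of unity
lemma pu_key {ι : Type*} [Fintype ι] [DecidableEq ι] (v : ι → ℝ) (k : ℕ) (j j0 : ι) :
    (∏ i ∈ Finset.univ.erase j, v i ^ (2*k)) * v j ^ (2*k)
      = (∏ i ∈ Finset.univ.erase j0, v i ^ (2*k)) * v j0 ^ (2*k) := by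
  have h1 := Finset.mul_prod_erase Finset.univ (fun i => v i ^ (2*k)) (Finset.mem_univ j)
  have h2 := Finset.mul_prod_erase Finset.univ (fun i => v i ^ (2*k)) (Finset.mem_univ j0)
  linear_combination h1 - h2

lemma even_pow_nonneg (t : ℝ) (k : ℕ) : 0 ≤ t ^ (2*k) := by
  rw [pow_mul]; exact pow_nonneg (sq_nonneg t) k

lemma even_pow_abs (t : ℝ) (k : ℕ) : t ^ (2*k) = |t| ^ (2*k) := by
  rw [pow_mul, pow_mul, sq_abs]

lemma nearest_node (a x h : ℝ) (m : ℕ) (hh0 : 0 < h) (hx1 : a ≤ x) (hxm : x ≤ a + m*h) :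
    ∃ jn : ℕ, jn ≤ m ∧ |x - (a + jn*h)| ≤ h := by
  set t := (x - a)/h with ht_def
  have hxa : 0 ≤ t := div_nonneg (by linarith) hh0.le
  have hxm' : t ≤ m := by rw [ht_def, div_le_iff₀ hh0]; linarith
  have hfl : ⌊t⌋₊ ≤ m := by
    have := Nat.floor_mono hxm'
    simpa [Nat.floor_natCast] using this
  refine ⟨⌊t⌋₊, hfl, ?_⟩
  have h1 : (⌊t⌋₊ : ℝ) ≤ t := Nat.floor_le hxa
  have h2 : t < ⌊t⌋₊ + 1 := Nat.lt_floor_add_one t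
  have hth : t * h = x - a := by rw [ht_def]; field_simp
  have key : x - (a + ⌊t⌋₊*h) = (t - ⌊t⌋₊) * h := by nlinarith
  rw [key, abs_of_nonneg (by nlinarith)]
  nlinarith

lemma far_scalar (M Dm E : ℝ) (K n : ℕ) (hM : 0 ≤ M) (hD : 0 ≤ Dm) (hE : 1 ≤ E)
    (hK1 : 1 ≤ K) (hKE : 4*E ≤ (16:ℝ)^K) :
    (M + Dm * n * E^n) * ((1/4:ℝ))^(2*(K*n)) ≤ (M + Dm) * (1/2:ℝ)^n := by
  have hq : ((1/4:ℝ))^(2*(K*n)) = (((1/16:ℝ))^K)^n := by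
    rw [pow_mul]
    norm_num
    rw [pow_mul]
  have h16 : ((1/16:ℝ))^K ≤ 1/2 := by
    calc ((1/16:ℝ))^K ≤ (1/16:ℝ)^1 := pow_le_pow_of_le_one (by norm_num) (by norm_num) hK1
    _ ≤ 1/2 := by norm_num
  have h16nn : (0:ℝ) ≤ ((1/16:ℝ))^K := by positivity
  have hn2 : (n:ℝ) ≤ 2^n := by exact_mod_cast (Nat.lt_two_pow_self (n := n)).le
  have hEK : E * ((1/16:ℝ))^K ≤ 1/4 := by
    have h16K : (0:ℝ) < 16^K := by positivity
    rw [show ((1/16:ℝ))^K = ((16:ℝ)^K)⁻¹ by rw [one_div, inv_pow]]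
    rw [mul_inv_le_iff₀ h16K]
    linarith
  rw [hq]
  have e1 : M * (((1/16:ℝ))^K)^n ≤ M * (1/2:ℝ)^n :=
    mul_le_mul_of_nonneg_left (pow_le_pow_left₀ h16nn h16 n) hM
  have e2 : (n:ℝ) * (E^n * (((1/16:ℝ))^K)^n) ≤ (1/2:ℝ)^n := by
    calc (n:ℝ) * (E^n * (((1/16:ℝ))^K)^n) = (n:ℝ) * (E * ((1/16:ℝ))^K)^n := by rw [mul_pow]
    _ ≤ (2:ℝ)^n * (1/4:ℝ)^n := by
        refine mul_le_mul hn2 (pow_le_pow_left₀ (by positivity) hEK n) (by positivity) (by positivity)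
    _ = (1/2:ℝ)^n := by rw [← mul_pow]; norm_num
  have e3 : Dm * ((n:ℝ) * (E^n * (((1/16:ℝ))^K)^n)) ≤ Dm * (1/2:ℝ)^n :=
    mul_le_mul_of_nonneg_left e2 hD
  nlinarith [e1, e3]

set_option maxHeartbeats 4000000 in
/-- **Geometric rate of best rational approximation for analytic functions.**
If `f` is real-analytic on an open set `U ⊇ [a, b]`, then there are `C > 0` and `ρ > 1` so that
for every total degree budget `N` there is a rational function `P/Q` with
`deg P + deg Q ≤ N`, `Q` nonvanishing on `[a, b]`, and uniform error at most `C · ρ^{-N}`. -/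
theorem rational_approximation_analytic_geometric_rate
    (a b : ℝ) (hab : a < b) (U : Set ℝ) (hU : IsOpen U) (hsub : Set.Icc a b ⊆ U)
    (f : ℝ → ℝ) (hf : AnalyticOnNhd ℝ f U) :
    ∃ C > (0 : ℝ), ∃ ρ > (1 : ℝ), ∀ N : ℕ,
      ∃ P Q : Polynomial ℝ,
        P.natDegree + Q.natDegree ≤ N ∧
        (∀ x ∈ Set.Icc a b, Q.eval x ≠ 0) ∧
        ∀ x ∈ Set.Icc a b, |f x - P.eval x / Q.eval x| ≤ C * ρ ^ (-(N : ℝ)) := by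
  obtain ⟨δ, hδ0, hball⟩ := uniform_radius_aux a b hab.le U hsub f hf
  -- nodes
  set m : ℕ := ⌈(b - a) / (δ / 4)⌉₊ with hm_def
  have hm1 : 1 ≤ m := Nat.one_le_ceil_iff.2 (div_pos (by linarith) (by linarith))
  set h : ℝ := (b - a) / m with hh_def
  have hm0 : (0:ℝ) < m := by exact_mod_cast hm1
  have hh0 : 0 < h := div_pos (by linarith) hm0
  have hhδ : h ≤ δ / 4 := by
    rw [hh_def, div_le_iff₀ hm0]
    have : (b - a) / (δ / 4) ≤ m := Nat.le_ceil _
    calc b - a = ((b - a) / (δ/4)) * (δ/4) := by field_simp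
    _ ≤ m * (δ/4) := by nlinarith
    _ = δ / 4 * m := by ring
  set y : Fin (m+1) → ℝ := fun j => a + j * h with hy_def
  have hy_mem : ∀ j, y j ∈ Set.Icc a b := by
    intro j
    have hj : (j:ℝ) ≤ m := by exact_mod_cast Nat.lt_succ_iff.1 j.isLt
    constructor
    · simp only [hy_def]; nlinarith [j.val.cast_nonneg (α := ℝ)]
    · simp only [hy_def]
      have : (j:ℝ) * h ≤ m * h := by nlinarith [j.val.cast_nonneg (α := ℝ)]
      have hmh : (m:ℝ) * h = b - a := by rw [hh_def]; field_simp
      linarith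
  have hy_inj : Function.Injective y := by
    intro i j hij
    simp only [hy_def, add_right_inj] at hij
    have : (i:ℝ) = j := by
      have := mul_right_cancel₀ (ne_of_gt hh0) hij
      exact_mod_cast this
    exact Fin.ext (by exact_mod_cast this)
  -- power series at the nodes
  have hps : ∀ j : Fin (m+1), ∃ p : FormalMultilinearSeries ℝ ℝ ℝ,
      HasFPowerSeriesOnBall f p (y j) (ENNReal.ofReal (2*δ)) := fun j => hball (y j) (hy_mem j)
  choose p hp using hps
  -- geometric approximation at the nodes
  have hδlt : ((δ.toNNReal : ℝ≥0) : ℝ≥0∞) < ENNReal.ofReal (2*δ) := by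
    have heq : ((δ.toNNReal : ℝ≥0) : ℝ≥0∞) = ENNReal.ofReal δ := rfl
    rw [heq]
    exact ENNReal.ofReal_lt_ofReal_iff (by linarith) |>.2 (by linarith)
  have happrox : ∀ j : Fin (m+1), ∃ aa ∈ Set.Ioo (0:ℝ) 1, ∃ CC > 0,
      ∀ z ∈ Metric.ball (0:ℝ) δ, ∀ n,
        |f (y j + z) - (p j).partialSum n z| ≤ CC * aa ^ n := by
    intro j
    obtain ⟨aa, haa, CC, hCC, hb⟩ := (hp j).uniform_geometric_approx (r' := δ.toNNReal) hδlt
    refine ⟨aa, haa, CC, hCC, fun z hz n => ?_⟩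
    have : z ∈ Metric.ball (0:ℝ) (δ.toNNReal : ℝ) := by
      simpa [Real.coe_toNNReal _ hδ0.le] using hz
    simpa [Real.norm_eq_abs] using hb z this n
  choose aa haa CC hCC happ using happrox
  -- coefficient bounds at the nodes
  have hcoeff : ∀ j : Fin (m+1), ∃ DD > 0, ∀ i : ℕ, |(p j).coeff i| ≤ DD / δ ^ i := by
    intro j
    have hrad : ((δ.toNNReal : ℝ≥0) : ℝ≥0∞) < (p j).radius := lt_of_lt_of_le hδlt (hp j).r_le
    obtain ⟨DD, hDD, hb⟩ := (p j).norm_le_div_pow_of_pos_of_lt_radius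
      (by simp [Real.toNNReal_pos.2 hδ0]) hrad
    refine ⟨DD, hDD, fun i => ?_⟩
    have := hb i
    rw [FormalMultilinearSeries.norm_apply_eq_norm_coef] at this
    simpa [Real.norm_eq_abs, Real.coe_toNNReal _ hδ0.le] using this
  choose DD hDD0 hDDb using hcoeff
  -- global bound on f
  obtain ⟨M0, hM0⟩ := isCompact_Icc.exists_bound_of_continuousOn
    ((hf.continuousOn).mono hsub)
  set M : ℝ := max M0 0 with hM_def
  have hM : ∀ x ∈ Set.Icc a b, |f x| ≤ M := fun x hx => by
    have := hM0 x hx; rw [Real.norm_eq_abs] at this; exact this.trans (le_max_left _ _)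
  have hMnn : 0 ≤ M := le_max_right _ _
  -- maxima of node constants
  have hne : (Finset.univ : Finset (Fin (m+1))).Nonempty := Finset.univ_nonempty
  set aM : ℝ := Finset.univ.sup' hne aa with haM_def
  set Cm : ℝ := Finset.univ.sup' hne CC with hCm_def
  set Dm : ℝ := Finset.univ.sup' hne DD with hDm_def
  have haM1 : aM < 1 := (Finset.sup'_lt_iff hne).2 fun j _ => (haa j).2
  have haM0 : 0 < aM := lt_of_lt_of_le (haa ⟨0, Nat.succ_pos m⟩).1
    (Finset.le_sup' aa (Finset.mem_univ _))
  have hCm0 : 0 < Cm := lt_of_lt_of_le (hCC ⟨0, Nat.succ_pos m⟩)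
    (Finset.le_sup' CC (Finset.mem_univ _))
  have hDm0 : 0 < Dm := lt_of_lt_of_le (hDD0 ⟨0, Nat.succ_pos m⟩)
    (Finset.le_sup' DD (Finset.mem_univ _))
  have haMle : ∀ j, aa j ≤ aM := fun j => Finset.le_sup' aa (Finset.mem_univ j)
  have hCmle : ∀ j, CC j ≤ Cm := fun j => Finset.le_sup' CC (Finset.mem_univ j)
  have hDmle : ∀ j, DD j ≤ Dm := fun j => Finset.le_sup' DD (Finset.mem_univ j)
  -- scale constant
  set E : ℝ := max ((b - a) / δ) 1 with hE_def
  have hE1 : 1 ≤ E := le_max_right _ _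
  have hE0 : 0 < E := lt_of_lt_of_le one_pos hE1
  -- choose K
  obtain ⟨K0, hK0⟩ := pow_unbounded_of_one_lt (4 * E) (by norm_num : (1:ℝ) < 16)
  set K : ℕ := max K0 1 with hK_def
  have hK1 : 1 ≤ K := le_max_right _ _
  have hKE : 4 * E ≤ (16:ℝ) ^ K :=
    le_trans hK0.le (pow_le_pow_right₀ (by norm_num) (le_max_left _ _))
  -- rate
  set τ : ℝ := max aM (1/2) with hτ_def
  have hτ0 : 0 < τ := lt_of_lt_of_le one_half_pos (le_max_right _ _)
  have hτ1 : τ < 1 := max_lt haM1 (by norm_num)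
  set κ : ℕ := 1 + 4 * K * m with hκ_def
  have hκ0 : 0 < κ := Nat.succ_le_iff.1 (by omega)
  set C₂ : ℝ := (m+1) * (Cm + M + Dm) with hC₂_def
  have hC₂0 : 0 < C₂ := by
    have h1 : (0:ℝ) < (m:ℝ) + 1 := by positivity
    have h2 : 0 < Cm + M + Dm := by linarith
    exact mul_pos h1 h2
  refine ⟨C₂ / τ, div_pos hC₂0 hτ0, τ ^ (-(1:ℝ)/κ), ?_, ?_⟩
  · rw [gt_iff_lt, Real.one_lt_rpow_iff_of_pos hτ0]
    right
    constructor
    · exact hτ1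
    · rw [div_neg_iff]
      right
      constructor
      · norm_num
      · exact_mod_cast Nat.cast_pos.2 hκ0
  have hmh : (m:ℝ) * h = b - a := by rw [hh_def]; field_simp
  intro N
  set n : ℕ := N / κ with hn_def
  set k : ℕ := K * n with hk_def
  set G : Fin (m+1) → Polynomial ℝ := fun j =>
    ∏ i ∈ Finset.univ.erase j, (Polynomial.X - Polynomial.C (y i)) ^ (2*k) with hG_def
  set T : Fin (m+1) → Polynomial ℝ := fun j =>
    ∑ i ∈ Finset.range n, Polynomial.C ((p j).coeff i)
      * (Polynomial.X - Polynomial.C (y j)) ^ i with hT_def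
  have hGeval : ∀ (j) (x : ℝ), (G j).eval x = ∏ i ∈ Finset.univ.erase j, (x - y i)^(2*k) := by
    intro j x
    simp [hG_def, Polynomial.eval_prod]
  have hTeval : ∀ (j) (x : ℝ), (T j).eval x = (p j).partialSum n (x - y j) := by
    intro j x
    simp [hT_def, Polynomial.eval_finset_sum, FormalMultilinearSeries.partialSum,
      FormalMultilinearSeries.apply_eq_pow_smul_coeff, smul_eq_mul, mul_comm]
  have hGdeg : ∀ j, (G j).natDegree ≤ 2*k*m := by
    intro j
    refine le_trans (Polynomial.natDegree_prod_le _ _) ?_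
    have h1 : ∀ i ∈ Finset.univ.erase j,
        ((Polynomial.X - Polynomial.C (y i)) ^ (2*k)).natDegree ≤ 2*k := by
      intro i _
      simp [Polynomial.natDegree_pow, Polynomial.natDegree_X_sub_C]
    refine le_trans (Finset.sum_le_sum h1) ?_
    rw [Finset.sum_const, Finset.card_erase_of_mem (Finset.mem_univ j)]
    simp [Finset.card_univ, mul_comm]
  have hTdeg : ∀ j, (T j).natDegree ≤ n := by
    intro j
    refine Polynomial.natDegree_sum_le_of_forall_le _ _ (fun i hi => ?_)
    refine le_trans (Polynomial.natDegree_mul_le) ?_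
    simp only [Polynomial.natDegree_C, Polynomial.natDegree_pow, Polynomial.natDegree_X_sub_C,
      zero_add, mul_one]
    exact le_of_lt (Finset.mem_range.1 hi)
  refine ⟨∑ j, T j * G j, ∑ j, G j, ?_, ?_, ?_⟩
  · -- degrees
    have hP : (∑ j, T j * G j).natDegree ≤ n + 2*k*m := by
      refine Polynomial.natDegree_sum_le_of_forall_le _ _ (fun j _ => ?_)
      exact le_trans (Polynomial.natDegree_mul_le) (add_le_add (hTdeg j) (hGdeg j))
    have hQ : (∑ j, G j).natDegree ≤ 2*k*m :=
      Polynomial.natDegree_sum_le_of_forall_le _ _ (fun j _ => hGdeg j)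
    have hκN : n * κ ≤ N := by rw [hn_def]; exact Nat.div_mul_le_self N κ
    calc (∑ j, T j * G j).natDegree + (∑ j, G j).natDegree
        ≤ (n + 2*k*m) + 2*k*m := add_le_add hP hQ
      _ = n * κ := by rw [hk_def, hκ_def]; ring
      _ ≤ N := hκN
  · -- nonvanishing
    intro x _
    have hpos : 0 < (∑ j, G j).eval x := by
      rw [Polynomial.eval_finset_sum]
      refine Finset.sum_pos' (fun j _ => ?_) ?_
      · rw [hGeval]
        exact Finset.prod_nonneg fun i _ => even_pow_nonneg _ _
      · by_cases hx : ∃ i, x = y i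
        · obtain ⟨i, hi⟩ := hx
          refine ⟨i, Finset.mem_univ i, ?_⟩
          rw [hGeval]
          refine Finset.prod_pos fun i' hi' => ?_
          have hne' : x - y i' ≠ 0 := by
            rw [hi]
            have : i' ≠ i := Finset.ne_of_mem_erase hi'
            exact sub_ne_zero.2 fun hc => this (hy_inj hc.symm)
          rw [pow_mul]
          exact pow_pos (by positivity) k
        · refine ⟨⟨0, Nat.succ_pos m⟩, Finset.mem_univ _, ?_⟩
          rw [hGeval]
          refine Finset.prod_pos fun i' _ => ?_
          have hne' : x - y i' ≠ 0 := sub_ne_zero.2 fun hc => hx ⟨i', hc⟩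
          rw [pow_mul]
          exact pow_pos (by positivity) k
    exact ne_of_gt hpos
  · -- estimate
    intro x hx
    set v : Fin (m+1) → ℝ := fun i => x - y i with hv_def
    set g : Fin (m+1) → ℝ := fun j => ∏ i ∈ Finset.univ.erase j, (v i)^(2*k) with hg_def
    set Qv : ℝ := ∑ j, g j with hQv_def
    have hgeval : ∀ j, (G j).eval x = g j := fun j => hGeval j x
    have hQeval : (∑ j, G j).eval x = Qv := by
      rw [Polynomial.eval_finset_sum]
      exact Finset.sum_congr rfl fun j _ => hgeval j
    have hgnn : ∀ j, 0 ≤ g j := fun j => Finset.prod_nonneg fun i _ => even_pow_nonneg _ _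
    have hgleQ : ∀ j, g j ≤ Qv := fun j =>
      Finset.single_le_sum (fun i _ => hgnn i) (Finset.mem_univ j)
    -- nearest node
    have hnear : ∃ j0 : Fin (m+1), |x - y j0| ≤ h ∧ 0 < g j0 := by
      have hgpos : ∀ j0 : Fin (m+1), (∀ i, i ≠ j0 → x ≠ y i) → 0 < g j0 := by
        intro j0 hne'
        refine Finset.prod_pos fun i hi => ?_
        have : x - y i ≠ 0 := sub_ne_zero.2 (hne' i (Finset.ne_of_mem_erase hi))
        rw [hv_def]; rw [pow_mul]; exact pow_pos (by positivity) k
      by_cases hxn : ∃ i, x = y i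
      · obtain ⟨i, hi⟩ := hxn
        refine ⟨i, by rw [← hi]; simpa using hh0.le, hgpos i fun i' hii' hc => ?_⟩
        exact hii' (hy_inj (hc.symm.trans hi).symm ▸ rfl)
      · push_neg at hxn
        obtain ⟨jn, hjn, hjnd⟩ := nearest_node a x h m hh0 hx.1 (by rw [hmh]; linarith [hx.2])
        exact ⟨⟨jn, by omega⟩, hjnd, hgpos _ fun i' _ hc => hxn i' hc⟩
    obtain ⟨j0, hj0h, hgj0⟩ := hnear
    have hQpos : 0 < Qv := lt_of_lt_of_le hgj0 (hgleQ j0)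
    -- decomposition
    have hPeval : (∑ j, T j * G j).eval x = ∑ j, (T j).eval x * g j := by
      rw [Polynomial.eval_finset_sum]
      exact Finset.sum_congr rfl fun j _ => by rw [Polynomial.eval_mul, hgeval]
    have hkey : f x - (∑ j, T j * G j).eval x / (∑ j, G j).eval x
        = (∑ j, (f x - (T j).eval x) * g j) / Qv := by
      rw [hPeval, hQeval, eq_div_iff (ne_of_gt hQpos), sub_mul,
        div_mul_cancel₀ _ (ne_of_gt hQpos), hQv_def, Finset.mul_sum,
        ← Finset.sum_sub_distrib]
      exact Finset.sum_congr rfl fun j _ => by ring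
    have habs : |f x - (∑ j, T j * G j).eval x / (∑ j, G j).eval x|
        ≤ ∑ j, |f x - (T j).eval x| * (g j / Qv) := by
      rw [hkey, abs_div, abs_of_pos hQpos, div_le_iff₀ hQpos]
      calc |∑ j, (f x - (T j).eval x) * g j| ≤ ∑ j, |(f x - (T j).eval x) * g j| :=
            Finset.abs_sum_le_sum_abs _ _
        _ = ∑ j, |f x - (T j).eval x| * (g j / Qv) * Qv := by
            refine Finset.sum_congr rfl fun j _ => ?_
            rw [abs_mul, abs_of_nonneg (hgnn j)]
            field_simp
        _ = (∑ j, |f x - (T j).eval x| * (g j / Qv)) * Qv := by rw [Finset.sum_mul]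
    -- per-term bound
    have hTbound : ∀ j, |(T j).eval x| ≤ Dm * n * E^n := by
      intro j
      have hTe : (T j).eval x = ∑ i ∈ Finset.range n, (p j).coeff i * (x - y j)^i := by
        simp [hT_def, Polynomial.eval_finset_sum]
      rw [hTe]
      have hz : |x - y j| ≤ b - a := by
        have h1 := hx.1; have h2 := hx.2
        have h3 := (hy_mem j).1; have h4 := (hy_mem j).2
        rw [abs_sub_le_iff]; constructor <;> linarith
      have hper : ∀ i ∈ Finset.range n, |(p j).coeff i * (x - y j)^i| ≤ Dm * E^n := by
        intro i hi
        have hin : i ≤ n := le_of_lt (Finset.mem_range.1 hi)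
        rw [abs_mul, abs_pow]
        have hc : |(p j).coeff i| ≤ Dm / δ^i :=
          le_trans (hDDb j i) ((div_le_div_iff_of_pos_right (pow_pos hδ0 i)).2 (hDmle j))
        have hzp : |x - y j|^i ≤ (b-a)^i := pow_le_pow_left₀ (abs_nonneg _) hz i
        calc |(p j).coeff i| * |x - y j|^i ≤ (Dm / δ^i) * (b-a)^i :=
              mul_le_mul hc hzp (pow_nonneg (abs_nonneg _) i)
                (div_nonneg hDm0.le (pow_nonneg hδ0.le i))
        _ = Dm * ((b-a)/δ)^i := by rw [div_pow]; ring
        _ ≤ Dm * E^i := by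
              refine mul_le_mul_of_nonneg_left (pow_le_pow_left₀ ?_ (le_max_left _ _) i) hDm0.le
              exact div_nonneg (by linarith) hδ0.le
        _ ≤ Dm * E^n := mul_le_mul_of_nonneg_left (pow_le_pow_right₀ hE1 hin) hDm0.le
      calc |∑ i ∈ Finset.range n, (p j).coeff i * (x - y j)^i|
          ≤ ∑ i ∈ Finset.range n, |(p j).coeff i * (x - y j)^i| := Finset.abs_sum_le_sum_abs _ _
      _ ≤ ∑ _i ∈ Finset.range n, Dm * E^n := Finset.sum_le_sum hper
      _ = n * (Dm * E^n) := by rw [Finset.sum_const, Finset.card_range, nsmul_eq_mul]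
      _ = Dm * n * E^n := by ring
    have hterm : ∀ j, |f x - (T j).eval x| * (g j / Qv)
        ≤ Cm * aM ^ n + (M + Dm) * (1/2:ℝ) ^ n := by
      intro j
      have hgQnn : 0 ≤ g j / Qv := div_nonneg (hgnn j) hQpos.le
      by_cases hcase : |x - y j| < δ
      · -- near node
        have h1 : |f x - (T j).eval x| ≤ Cm * aM^n := by
          rw [hTeval]
          have hz : (x - y j) ∈ Metric.ball (0:ℝ) δ := by
            rw [mem_ball_zero_iff, Real.norm_eq_abs]; exact hcase
          have h2 := happ j (x - y j) hz n
          rw [add_sub_cancel] at h2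
          refine h2.trans ?_
          exact mul_le_mul (hCmle j) (pow_le_pow_left₀ (haa j).1.le (haMle j) n)
            (pow_nonneg (haa j).1.le n) hCm0.le
        have h2 : g j / Qv ≤ 1 := (div_le_one hQpos).2 (hgleQ j)
        calc |f x - (T j).eval x| * (g j / Qv) ≤ (Cm * aM^n) * 1 :=
              mul_le_mul h1 h2 hgQnn (mul_nonneg hCm0.le (pow_nonneg haM0.le n))
        _ = Cm * aM^n := mul_one _
        _ ≤ _ := le_add_of_nonneg_right
              (mul_nonneg (by linarith) (pow_nonneg (by norm_num) n))
      · -- far node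
        push_neg at hcase
        have hvj : x - y j ≠ 0 := abs_pos.1 (lt_of_lt_of_le hδ0 hcase)
        have hgratio : g j / Qv ≤ ((1/4:ℝ))^(2*k) := by
          have hA : g j / Qv ≤ g j / g j0 :=
            div_le_div_of_nonneg_left (hgnn j) hgj0 (hgleQ j0)
          have hkeyr := pu_key v k j j0
          have hB : g j / g j0 = (x - y j0)^(2*k) / (x - y j)^(2*k) := by
            rw [div_eq_div_iff (ne_of_gt hgj0) (pow_ne_zero _ hvj)]
            linear_combination hkeyr
          have hC : (x - y j0)^(2*k) / (x - y j)^(2*k) ≤ (h/δ)^(2*k) := by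
            rw [even_pow_abs (x - y j0) k, even_pow_abs (x - y j) k, div_pow]
            refine div_le_div₀ (pow_nonneg hh0.le _) ?_ (pow_pos hδ0 _) ?_
            · exact pow_le_pow_left₀ (abs_nonneg _) hj0h _
            · exact pow_le_pow_left₀ hδ0.le hcase _
          have hD2 : (h/δ)^(2*k) ≤ (1/4:ℝ)^(2*k) := by
            refine pow_le_pow_left₀ (div_nonneg hh0.le hδ0.le) ?_ _
            rw [div_le_div_iff₀ hδ0 (by norm_num)]
            linarith
          calc g j / Qv ≤ g j / g j0 := hA
          _ = (x - y j0)^(2*k) / (x - y j)^(2*k) := hB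
          _ ≤ (h/δ)^(2*k) := hC
          _ ≤ (1/4:ℝ)^(2*k) := hD2
        have hfT : |f x - (T j).eval x| ≤ M + Dm * n * E^n := by
          have hns := norm_sub_le (f x) ((T j).eval x)
          simp only [Real.norm_eq_abs] at hns
          exact hns.trans (add_le_add (hM x hx) (hTbound j))
        calc |f x - (T j).eval x| * (g j / Qv)
            ≤ (M + Dm * n * E^n) * ((1/4:ℝ))^(2*k) := by
              refine mul_le_mul hfT hgratio hgQnn ?_
              have := hTbound j
              have h0 : (0:ℝ) ≤ Dm * n * E^n :=
                mul_nonneg (mul_nonneg hDm0.le (Nat.cast_nonneg n)) (pow_nonneg hE0.le n)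
              linarith
        _ = (M + Dm * n * E^n) * ((1/4:ℝ))^(2*(K*n)) := by rw [hk_def]
        _ ≤ (M + Dm) * (1/2:ℝ)^n := far_scalar M Dm E K n hMnn hDm0.le hE1 hK1 hKE
        _ ≤ _ := le_add_of_nonneg_left (mul_nonneg hCm0.le (pow_nonneg haM0.le n))
    -- summation and final bound
    refine le_trans habs ?_
    have hsum : ∑ j, |f x - (T j).eval x| * (g j / Qv)
        ≤ ((m:ℝ)+1) * (Cm * aM^n + (M + Dm)*(1/2:ℝ)^n) := by
      refine le_trans (Finset.sum_le_sum fun j _ => hterm j) ?_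
      rw [Finset.sum_const, Finset.card_univ, Fintype.card_fin, nsmul_eq_mul]
      push_cast
      exact le_rfl
    refine le_trans hsum ?_
    have hτn1 : aM^n ≤ τ^n := pow_le_pow_left₀ haM0.le (le_max_left _ _) n
    have hτn2 : (1/2:ℝ)^n ≤ τ^n := pow_le_pow_left₀ (by norm_num) (le_max_right _ _) n
    have hstep : ((m:ℝ)+1) * (Cm * aM^n + (M + Dm)*(1/2:ℝ)^n) ≤ C₂ * τ^n := by
      rw [hC₂_def]
      have h1 : Cm * aM^n ≤ Cm * τ^n := mul_le_mul_of_nonneg_left hτn1 hCm0.le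
      have h2 : (M+Dm)*(1/2:ℝ)^n ≤ (M+Dm)*τ^n :=
        mul_le_mul_of_nonneg_left hτn2 (by linarith)
      have h3 : (0:ℝ) ≤ (m:ℝ) + 1 := add_nonneg (Nat.cast_nonneg m) zero_le_one
      nlinarith
    refine le_trans hstep ?_
    have hexp : ((τ:ℝ) ^ (-(1:ℝ)/(κ:ℝ))) ^ (-(N:ℝ)) = τ ^ ((N:ℝ)/(κ:ℝ)) := by
      rw [← Real.rpow_mul hτ0.le]
      congr 1
      have hκR : (κ:ℝ) ≠ 0 := ne_of_gt (by exact_mod_cast hκ0)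
      field_simp
    rw [hexp]
    have hκR0 : (0:ℝ) < (κ:ℝ) := by exact_mod_cast hκ0
    have hNκ : (N:ℝ)/(κ:ℝ) - 1 ≤ (n:ℝ) := by
      have h1 := Nat.div_add_mod N κ
      have h2 := Nat.mod_lt N hκ0
      have h1' : (N:ℝ) = (κ:ℝ) * (n:ℝ) + ((N % κ : ℕ):ℝ) := by
        rw [hn_def]; exact_mod_cast h1.symm
      have h2' : ((N % κ : ℕ):ℝ) < (κ:ℝ) := by exact_mod_cast h2
      have hgoal : (N:ℝ)/(κ:ℝ) ≤ (n:ℝ) + 1 := by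
        rw [div_le_iff₀ hκR0]
        nlinarith
      linarith
    have h2 : τ ^ ((n:ℝ)) ≤ τ ^ ((N:ℝ)/(κ:ℝ) - 1) :=
      Real.rpow_le_rpow_of_exponent_ge hτ0 hτ1.le hNκ
    have h3 : τ ^ ((N:ℝ)/(κ:ℝ) - 1) = τ ^ ((N:ℝ)/(κ:ℝ)) / τ := by
      rw [Real.rpow_sub hτ0, Real.rpow_one]
    calc C₂ * τ^n = C₂ * τ^((n:ℝ)) := by rw [Real.rpow_natCast]
    _ ≤ C₂ * (τ^((N:ℝ)/(κ:ℝ))/τ) := by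
        rw [← h3]; exact mul_le_mul_of_nonneg_left h2 hC₂0.le
    _ = C₂/τ * τ^((N:ℝ)/(κ:ℝ)) := by ring
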